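/- arXiv:1809.03295 — 2 statements merged into one kernel-verified Lean document; each statement's English description precedes it below -/
import Mathlib

section
/- An element α' ∈ H⊗H satisfies (αΔ⊗1)α' = (1⊗αΔ)α' − (12)(1⊗αΔ)α' if and only if α' = α·Δ(A) for some A ∈ H. In particular, every nonzero solution α' of this equation is of the form α·Δ(A), and conversely every element of the form α·Δ(A) is a solution. -/
open scoped TensorProduct
open Polynomial

noncomputable section

variable (k : Type) [Field k] [CharZero k]

/-- `H ⊗ H` where `H = k[s]`. -/
abbrev HH := Polynomial k ⊗[k] Polynomial k

/-- `H ⊗ H ⊗ H`. -/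
abbrev HHH := Polynomial k ⊗[k] (Polynomial k ⊗[k] Polynomial k)

/-- The comultiplication `Δ : H → H ⊗ H`, with `Δ(s) = s⊗1 + 1⊗s`. -/
def Hcomul : Polynomial k →ₐ[k] HH k :=
  aeval ((X : Polynomial k) ⊗ₜ[k] (1 : Polynomial k) +
    (1 : Polynomial k) ⊗ₜ[k] (X : Polynomial k))

/-- The swap `(12)` on `H ⊗ H`. -/
def sw2 : HH k ≃ₐ[k] HH k := Algebra.TensorProduct.comm k _ _

/-- Associator `(H⊗H)⊗H ≃ H⊗(H⊗H)`. -/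
def tAssoc : (HH k ⊗[k] Polynomial k) ≃ₐ[k] HHH k :=
  Algebra.TensorProduct.assoc k k k (Polynomial k) (Polynomial k) (Polynomial k)

/-- The swap of the first two tensor factors on `H ⊗ H ⊗ H`. -/
def sw12 : HHH k ≃ₐ[k] HHH k :=
  (tAssoc k).symm.trans
    ((Algebra.TensorProduct.congr (sw2 k) AlgEquiv.refl).trans (tAssoc k))

/-- `Δ ⊗ id : H⊗H → H⊗H⊗H`. -/
def DL : HH k →ₐ[k] HHH k :=
  (tAssoc k).toAlgHom.comp (Algebra.TensorProduct.map (Hcomul k) (AlgHom.id k _))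

/-- `id ⊗ Δ : H⊗H → H⊗H⊗H`. -/
def DR : HH k →ₐ[k] HHH k :=
  Algebra.TensorProduct.map (AlgHom.id k _) (Hcomul k)

/-- `β ↦ β ⊗ 1` into the first two factors of `H⊗H⊗H`. -/
def inc12 : HH k →ₐ[k] HHH k :=
  (tAssoc k).toAlgHom.comp Algebra.TensorProduct.includeLeft

/-- `β ↦ 1 ⊗ β` into the last two factors of `H⊗H⊗H`. -/
def inc23 : HH k →ₐ[k] HHH k := Algebra.TensorProduct.includeRight

/-- `(βΔ⊗1)γ := (β⊗1)·((Δ⊗id)(γ))`. -/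
def opL (β γ : HH k) : HHH k := inc12 k β * DL k γ

/-- `(1⊗βΔ)γ := (1⊗β)·((id⊗Δ)(γ))`. -/
def opR (β γ : HH k) : HHH k := inc23 k β * DR k γ

/-- The divided power `s^(n) = sⁿ/n!`. -/
def sp (n : ℕ) : Polynomial k := (n.factorial : k)⁻¹ • X ^ n

/-- `α = s⊗1 − 1⊗s`. -/
def alphaE : HH k :=
  (X : Polynomial k) ⊗ₜ[k] (1 : Polynomial k) -
    (1 : Polynomial k) ⊗ₜ[k] (X : Polynomial k)

/-- `β = λ s⊗1 − 1⊗s + κ 1⊗1`. -/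
def betaE (lam kap : k) : HH k :=
  lam • ((X : Polynomial k) ⊗ₜ[k] (1 : Polynomial k)) -
    (1 : Polynomial k) ⊗ₜ[k] (X : Polynomial k) +
    kap • ((1 : Polynomial k) ⊗ₜ[k] (1 : Polynomial k))


abbrev R2 := MvPolynomial (Fin 2) k
abbrev R3 := MvPolynomial (Fin 3) k

-- nonzeroness helpers
lemma X01_ne : (MvPolynomial.X 0 - MvPolynomial.X 1 : R2 k) ≠ 0 := by
  intro h
  have := congrArg (MvPolynomial.eval (fun i : Fin 2 => if i = 0 then (1:k) else 0)) h
  simp at this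
lemma X01_ne' : (MvPolynomial.X 0 + MvPolynomial.X 1 : R2 k) ≠ 0 := by
  intro h
  have := congrArg (MvPolynomial.eval (fun i : Fin 2 => if i = 0 then (1:k) else 0)) h
  simp at this

-- divisibility lemma
lemma sub_dvd (p : R2 k) :
    (MvPolynomial.X 0 - MvPolynomial.X 1 : R2 k) ∣ (p - (MvPolynomial.aeval (R := k) ![(MvPolynomial.X 1 : R2 k), MvPolynomial.X 1]) p) := by
  induction p using MvPolynomial.induction_on with
  | C a => simp
  | add p q hp hq =>
      have : (p + q) - (MvPolynomial.aeval (R := k) ![(MvPolynomial.X 1 : R2 k), MvPolynomial.X 1]) (p + q)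
          = (p - (MvPolynomial.aeval (R := k) ![(MvPolynomial.X 1 : R2 k), MvPolynomial.X 1]) p) + (q - (MvPolynomial.aeval (R := k) ![(MvPolynomial.X 1 : R2 k), MvPolynomial.X 1]) q) := by
        rw [map_add]; ring
      rw [this]; exact dvd_add hp hq
  | mul_X p i hp =>
      have key : (p * MvPolynomial.X i) - (MvPolynomial.aeval (R := k) ![(MvPolynomial.X 1 : R2 k), MvPolynomial.X 1]) (p * MvPolynomial.X i)
          = (p - (MvPolynomial.aeval (R := k) ![(MvPolynomial.X 1 : R2 k), MvPolynomial.X 1]) p) * MvPolynomial.X i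
            + (MvPolynomial.aeval (R := k) ![(MvPolynomial.X 1 : R2 k), MvPolynomial.X 1]) p * (MvPolynomial.X i - (MvPolynomial.aeval (R := k) ![(MvPolynomial.X 1 : R2 k), MvPolynomial.X 1]) (MvPolynomial.X i)) := by
        rw [map_mul]; ring
      rw [key]
      refine dvd_add (hp.mul_right _) (Dvd.dvd.mul_left ?_ _)
      fin_cases i <;> simp

set_option linter.unusedSectionVars false

def dl' : R2 k →ₐ[k] R3 k := MvPolynomial.aeval ![MvPolynomial.X 0 + MvPolynomial.X 1, MvPolynomial.X 2]
def dr' : R2 k →ₐ[k] R3 k := MvPolynomial.aeval ![MvPolynomial.X 0, MvPolynomial.X 1 + MvPolynomial.X 2]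
def drs' : R2 k →ₐ[k] R3 k := MvPolynomial.aeval ![MvPolynomial.X 1, MvPolynomial.X 0 + MvPolynomial.X 2]
def sw' : R3 k →ₐ[k] R3 k := MvPolynomial.aeval ![MvPolynomial.X 1, MvPolynomial.X 0, MvPolynomial.X 2]

-- substitution z := y
def phi1 : R3 k →ₐ[k] R2 k := MvPolynomial.aeval ![MvPolynomial.X 0, MvPolynomial.X 1, MvPolynomial.X 1]
-- substitution z := 0
def phi0 : R3 k →ₐ[k] R2 k := MvPolynomial.aeval ![MvPolynomial.X 0, MvPolynomial.X 1, 0]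
-- χ, ψ, τ, σ
def chi : R2 k →ₐ[k] R2 k := MvPolynomial.aeval ![MvPolynomial.X 0 + MvPolynomial.X 1, MvPolynomial.X 1]
def chi' : R2 k →ₐ[k] R2 k := MvPolynomial.aeval ![MvPolynomial.X 1, MvPolynomial.X 0 + MvPolynomial.X 1]
def psi : R2 k →ₐ[k] R2 k := MvPolynomial.aeval ![MvPolynomial.X 0 - MvPolynomial.X 1, MvPolynomial.X 1]
def tau : R2 k →ₐ[k] R2 k := MvPolynomial.aeval ![MvPolynomial.X 1, MvPolynomial.X 0]
def sig : R2 k →ₐ[k] R2 k := MvPolynomial.aeval ![MvPolynomial.X 0 + MvPolynomial.X 1, 0]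
def pis : R2 k →ₐ[k] R2 k := MvPolynomial.aeval ![MvPolynomial.X 1, MvPolynomial.X 1]

theorem main (p : R2 k) :
    (MvPolynomial.X 0 - MvPolynomial.X 1) * dl' k p = (MvPolynomial.X 1 - MvPolynomial.X 2) * dr' k p - (MvPolynomial.X 0 - MvPolynomial.X 2) * drs' k p ↔
    ∃ A : Polynomial k, p = (MvPolynomial.X 0 - MvPolynomial.X 1) * Polynomial.aeval (MvPolynomial.X 0 + MvPolynomial.X 1 : R2 k) A := by
  have e_comp : ∀ (f : R2 k →ₐ[k] R3 k) (g : R3 k →ₐ[k] R2 k) (u v : R2 k),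
      True := fun _ _ _ _ => trivial
  constructor
  · intro h
    -- Step 1: antisymmetry
    have e_dl : (phi1 k).comp (dl' k) = chi k := by
      rw [dl', chi, MvPolynomial.comp_aeval]; congr 1
      funext i; fin_cases i <;> simp [phi1]
    have e_drs : (phi1 k).comp (drs' k) = chi' k := by
      rw [drs', chi', MvPolynomial.comp_aeval]; congr 1
      funext i; fin_cases i <;> simp [phi1]
    have h1 := congrArg (phi1 k) h
    simp only [map_mul, map_sub] at h1
    rw [show phi1 k (MvPolynomial.X 0) = MvPolynomial.X 0 by simp [phi1], show phi1 k (MvPolynomial.X 1) = MvPolynomial.X 1 by simp [phi1],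
      show phi1 k (MvPolynomial.X 2) = MvPolynomial.X 1 by simp [phi1],
      show phi1 k ((dl' k) p) = chi k p from DFunLike.congr_fun e_dl p,
      show phi1 k ((drs' k) p) = chi' k p from DFunLike.congr_fun e_drs p] at h1
    have hanti0 : chi k p = - chi' k p :=
      mul_left_cancel₀ (X01_ne k)
        (show (MvPolynomial.X 0 - MvPolynomial.X 1) * chi k p = (MvPolynomial.X 0 - MvPolynomial.X 1) * (- chi' k p) by linear_combination h1)
    -- recover p = - tau p
    have e_psichi : (psi k).comp (chi k) = AlgHom.id k (R2 k) := by
      rw [chi, MvPolynomial.comp_aeval, ← MvPolynomial.aeval_X_left]; congr 1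
      funext i; fin_cases i <;> simp [psi]
    have e_psichi' : (psi k).comp (chi' k) = tau k := by
      rw [chi', tau, MvPolynomial.comp_aeval]; congr 1
      funext i; fin_cases i <;> simp [psi]
    have hanti : p = - tau k p := by
      have := congrArg (psi k) hanti0
      rw [map_neg, show psi k (chi k p) = p from DFunLike.congr_fun e_psichi p,
        show psi k (chi' k p) = tau k p from DFunLike.congr_fun e_psichi' p] at this
      exact this
    -- Step 2: the z := 0 specialization
    have e_dl0 : (phi0 k).comp (dl' k) = sig k := by
      rw [dl', sig, MvPolynomial.comp_aeval]; congr 1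
      funext i; fin_cases i <;> simp [phi0]
    have e_dr0 : (phi0 k).comp (dr' k) = AlgHom.id k (R2 k) := by
      rw [dr', MvPolynomial.comp_aeval, ← MvPolynomial.aeval_X_left]; congr 1
      funext i; fin_cases i <;> simp [phi0]
    have e_drs0 : (phi0 k).comp (drs' k) = tau k := by
      rw [drs', tau, MvPolynomial.comp_aeval]; congr 1
      funext i; fin_cases i <;> simp [phi0]
    have h0 := congrArg (phi0 k) h
    simp only [map_mul, map_sub] at h0
    rw [show phi0 k (MvPolynomial.X 0) = MvPolynomial.X 0 by simp [phi0], show phi0 k (MvPolynomial.X 1) = MvPolynomial.X 1 by simp [phi0],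
      show phi0 k (MvPolynomial.X 2) = 0 by simp [phi0],
      show phi0 k ((dl' k) p) = sig k p from DFunLike.congr_fun e_dl0 p,
      show phi0 k ((dr' k) p) = p from DFunLike.congr_fun e_dr0 p,
      show phi0 k ((drs' k) p) = tau k p from DFunLike.congr_fun e_drs0 p] at h0
    -- h0 : (X0 - X1) * sig p = (X1 - 0) * p - (X0 - 0) * tau p
    have h2 : (MvPolynomial.X 0 - MvPolynomial.X 1) * sig k p = (MvPolynomial.X 0 + MvPolynomial.X 1) * p := by
      linear_combination h0 - (MvPolynomial.X 0 : R2 k) * hanti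
    -- Step 3: divisibility
    have hpi : pis k p = 0 := by
      have e_pitau : (pis k).comp (tau k) = pis k := by
        rw [tau, pis, MvPolynomial.comp_aeval]; congr 1
        funext i; fin_cases i <;> simp [pis]
      have := congrArg (pis k) hanti
      rw [map_neg, show pis k (tau k p) = pis k p from DFunLike.congr_fun e_pitau p] at this
      have h2 : (2 : R2 k) * pis k p = 0 := by linear_combination this
      rcases mul_eq_zero.1 h2 with h | h
      · exact absurd h two_ne_zero
      · exact h
    obtain ⟨q, hq⟩ : (MvPolynomial.X 0 - MvPolynomial.X 1 : R2 k) ∣ p := by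
      have := sub_dvd k p
      rwa [show (MvPolynomial.aeval ![(MvPolynomial.X 1 : R2 k), MvPolynomial.X 1] : R2 k →ₐ[k] R2 k) p = pis k p from rfl, hpi,
        sub_zero] at this
    -- Step 4: q = sig q
    have hsigq : sig k q = q := by
      have hsub : sig k (MvPolynomial.X 0 - MvPolynomial.X 1 : R2 k) = MvPolynomial.X 0 + MvPolynomial.X 1 := by
        rw [map_sub]; simp [sig]
      rw [hq, map_mul, hsub] at h2
      have := mul_left_cancel₀ (mul_ne_zero (X01_ne' k) (X01_ne k))
        (show (MvPolynomial.X 0 + MvPolynomial.X 1) * (MvPolynomial.X 0 - MvPolynomial.X 1) * sig k q = (MvPolynomial.X 0 + MvPolynomial.X 1) * (MvPolynomial.X 0 - MvPolynomial.X 1) * q by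
          linear_combination h2)
      exact this
    -- Step 5: produce A
    refine ⟨(MvPolynomial.aeval ![Polynomial.X, 0] : R2 k →ₐ[k] Polynomial k) q, ?_⟩
    have e_final : (Polynomial.aeval (MvPolynomial.X 0 + MvPolynomial.X 1 : R2 k)).comp
        (MvPolynomial.aeval ![Polynomial.X, 0] : R2 k →ₐ[k] Polynomial k) = sig k := by
      rw [sig, MvPolynomial.comp_aeval]; congr 1
      funext i; fin_cases i <;> simp
    rw [show (Polynomial.aeval (MvPolynomial.X 0 + MvPolynomial.X 1 : R2 k))
        ((MvPolynomial.aeval ![Polynomial.X, 0] : R2 k →ₐ[k] Polynomial k) q) = sig k q from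
        DFunLike.congr_fun e_final q, hsigq, hq]
  · rintro ⟨A, rfl⟩
    simp only [map_mul, map_sub]
    rw [show dl' k (MvPolynomial.X 0 : R2 k) = MvPolynomial.X 0 + MvPolynomial.X 1 by simp [dl'],
      show dl' k (MvPolynomial.X 1 : R2 k) = MvPolynomial.X 2 by simp [dl'],
      show dr' k (MvPolynomial.X 0 : R2 k) = MvPolynomial.X 0 by simp [dr'],
      show dr' k (MvPolynomial.X 1 : R2 k) = MvPolynomial.X 1 + MvPolynomial.X 2 by simp [dr'],
      show drs' k (MvPolynomial.X 0 : R2 k) = MvPolynomial.X 1 by simp [drs'],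
      show drs' k (MvPolynomial.X 1 : R2 k) = MvPolynomial.X 0 + MvPolynomial.X 2 by simp [drs'],
      show dl' k (Polynomial.aeval (MvPolynomial.X 0 + MvPolynomial.X 1 : R2 k) A)
        = Polynomial.aeval (MvPolynomial.X 0 + MvPolynomial.X 1 + MvPolynomial.X 2 : R3 k) A by
        rw [← Polynomial.aeval_algHom_apply]; rw [map_add]; norm_num [dl'],
      show dr' k (Polynomial.aeval (MvPolynomial.X 0 + MvPolynomial.X 1 : R2 k) A)
        = Polynomial.aeval (MvPolynomial.X 0 + MvPolynomial.X 1 + MvPolynomial.X 2 : R3 k) A by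
        rw [← Polynomial.aeval_algHom_apply]; rw [map_add]; norm_num [dr']; ring_nf,
      show drs' k (Polynomial.aeval (MvPolynomial.X 0 + MvPolynomial.X 1 : R2 k) A)
        = Polynomial.aeval (MvPolynomial.X 0 + MvPolynomial.X 1 + MvPolynomial.X 2 : R3 k) A by
        rw [← Polynomial.aeval_algHom_apply]; rw [map_add]; norm_num [drs']; ring_nf]
    ring


def F2 : HH k →ₐ[k] R2 k :=
  Algebra.TensorProduct.productMap (Polynomial.aeval (MvPolynomial.X 0))
    (Polynomial.aeval (MvPolynomial.X 1))

def F3 : HHH k →ₐ[k] R3 k :=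
  Algebra.TensorProduct.productMap (Polynomial.aeval (MvPolynomial.X 0))
    (Algebra.TensorProduct.productMap (Polynomial.aeval (MvPolynomial.X 1))
      (Polynomial.aeval (MvPolynomial.X 2)))

def G2 : R2 k →ₐ[k] HH k :=
  MvPolynomial.aeval ![(X : Polynomial k) ⊗ₜ[k] (1 : Polynomial k),
    (1 : Polynomial k) ⊗ₜ[k] (X : Polynomial k)]

def G3 : R3 k →ₐ[k] HHH k :=
  MvPolynomial.aeval
    ![(X : Polynomial k) ⊗ₜ[k] ((1 : Polynomial k) ⊗ₜ[k] (1 : Polynomial k)),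
      (1 : Polynomial k) ⊗ₜ[k] ((X : Polynomial k) ⊗ₜ[k] (1 : Polynomial k)),
      (1 : Polynomial k) ⊗ₜ[k] ((1 : Polynomial k) ⊗ₜ[k] (X : Polynomial k))]

lemma G2F2 : (G2 k).comp (F2 k) = AlgHom.id k (HH k) := by
  ext
  · simp [F2, G2]
  · simp [F2, G2]

lemma G3F3 : (G3 k).comp (F3 k) = AlgHom.id k (HHH k) := by
  ext
  · simp [F3, G3, Algebra.TensorProduct.one_def]
  · simp [F3, G3, Algebra.TensorProduct.one_def]
  · simp [F3, G3, Algebra.TensorProduct.one_def]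

lemma F2_inj : Function.Injective (F2 k) :=
  Function.LeftInverse.injective (g := G2 k) (fun x => DFunLike.congr_fun (G2F2 k) x)

lemma F3_inj : Function.Injective (F3 k) :=
  Function.LeftInverse.injective (g := G3 k) (fun x => DFunLike.congr_fun (G3F3 k) x)

set_option synthInstance.maxHeartbeats 1000000 in
lemma cDL : (F3 k).comp (DL k) = (dl' k).comp (F2 k) := by
  ext
  · simp [F3, F2, DL, dl', Hcomul, tAssoc, Algebra.TensorProduct.assoc_tmul, Algebra.TensorProduct.one_def, TensorProduct.add_tmul]
  · simp [F3, F2, DL, dl', Hcomul, tAssoc, Algebra.TensorProduct.assoc_tmul, Algebra.TensorProduct.one_def, TensorProduct.add_tmul]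

lemma cDR : (F3 k).comp (DR k) = (dr' k).comp (F2 k) := by
  ext
  · simp [F3, F2, DR, dr', Hcomul]
  · simp [F3, F2, DR, dr', Hcomul]

lemma cSW : (F3 k).comp (sw12 k).toAlgHom = (sw' k).comp (F3 k) := by
  ext
  · simp [F3, sw12, sw', tAssoc, sw2, Algebra.TensorProduct.one_def]
  · simp [F3, sw12, sw', tAssoc, sw2, Algebra.TensorProduct.one_def]
  · simp [F3, sw12, sw', tAssoc, sw2, Algebra.TensorProduct.one_def]

lemma cHc : (F2 k).comp (Hcomul k) =
    Polynomial.aeval (MvPolynomial.X 0 + MvPolynomial.X 1 : R2 k) := by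
  apply Polynomial.algHom_ext
  simp [F2, Hcomul]

lemma cSWDR : (sw' k).comp (dr' k) = drs' k := by
  rw [dr', drs', sw', MvPolynomial.comp_aeval]
  congr 1
  funext i; fin_cases i <;> simp

set_option synthInstance.maxHeartbeats 1000000 in
lemma vA12 : F3 k (inc12 k (alphaE k)) = MvPolynomial.X 0 - MvPolynomial.X 1 := by
  simp [F3, inc12, alphaE, tAssoc, Algebra.TensorProduct.assoc_tmul, TensorProduct.sub_tmul, Algebra.TensorProduct.one_def]

lemma vA23 : F3 k (inc23 k (alphaE k)) = MvPolynomial.X 1 - MvPolynomial.X 2 := by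
  simp [F3, inc23, alphaE, Algebra.TensorProduct.one_def]

lemma vA2 : F2 k (alphaE k) = MvPolynomial.X 0 - MvPolynomial.X 1 := by
  simp [F2, alphaE]

lemma vSW23 : sw' k (MvPolynomial.X 1 - MvPolynomial.X 2 : R3 k)
    = MvPolynomial.X 0 - MvPolynomial.X 2 := by
  simp [sw']

lemma bridgeL (β γ : HH k) :
    F3 k (opL k β γ) = F3 k (inc12 k β) * dl' k (F2 k γ) := by
  rw [opL, map_mul, show F3 k (DL k γ) = dl' k (F2 k γ) from DFunLike.congr_fun (cDL k) γ]

lemma bridgeR (β γ : HH k) :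
    F3 k (opR k β γ - sw12 k (opR k β γ))
      = F3 k (inc23 k β) * dr' k (F2 k γ)
        - sw' k (F3 k (inc23 k β)) * drs' k (F2 k γ) := by
  rw [opR, map_sub, map_mul, show F3 k (sw12 k (inc23 k β * DR k γ))
      = sw' k (F3 k (inc23 k β * DR k γ)) from DFunLike.congr_fun (cSW k) _,
    map_mul, map_mul, show F3 k (DR k γ) = dr' k (F2 k γ) from DFunLike.congr_fun (cDR k) γ,
    show sw' k (dr' k (F2 k γ)) = drs' k (F2 k γ) from DFunLike.congr_fun (cSWDR k) (F2 k γ)]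

/-- **Lemma 2.6:** an element `α' ∈ H⊗H` satisfies
`(αΔ⊗1)α' = (1⊗αΔ)α' − (12)(1⊗αΔ)α'` if and only if `α' = α·Δ(A)` for some `A ∈ H`. -/
theorem alpha'_solution_abelian
    (k : Type) [Field k] [CharZero k] (α' : HH k) :
    (opL k (alphaE k) α' =
      opR k (alphaE k) α' - sw12 k (opR k (alphaE k) α')) ↔
    ∃ A : Polynomial k, α' = alphaE k * Hcomul k A := by
  have hp : ∀ A : Polynomial k, F2 k (alphaE k * Hcomul k A)
      = (MvPolynomial.X 0 - MvPolynomial.X 1)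
        * Polynomial.aeval (MvPolynomial.X 0 + MvPolynomial.X 1 : R2 k) A := by
    intro A
    rw [map_mul, vA2, show F2 k (Hcomul k A) = Polynomial.aeval (MvPolynomial.X 0 + MvPolynomial.X 1 : R2 k) A from DFunLike.congr_fun (cHc k) A]
  constructor
  · intro h
    have h3 := congrArg (F3 k) h
    rw [bridgeL, bridgeR, vA12, vA23, vSW23] at h3
    obtain ⟨A, hA⟩ := (main k (F2 k α')).mp h3
    refine ⟨A, F2_inj k ?_⟩
    rw [hp A]
    exact hA
  · rintro ⟨A, rfl⟩
    apply F3_inj k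
    rw [bridgeL, bridgeR, vA12, vA23, vSW23]
    exact (main k _).mpr ⟨A, hp A⟩

end
end

section
/- Structure of η and α' in m-type Schrödinger–Virasoro Lie conformal algebras: Let λ1, κ1, λ2, κ2 ∈ k and set β1 := λ1 s⊗1 − 1⊗s + κ1⊗1 and β2 := λ2 s⊗1 − 1⊗s + κ2⊗1. Suppose η ∈ H⊗H is of the form η = Σ_i b_i s^(i)⊗1 (b_i ∈ k) and satisfies (β1Δ⊗1)η = (1⊗ηΔ)β2 − (12)(1⊗β2Δ)η, and suppose α' ∈ H⊗H satisfies (β1Δ⊗1)α' = (1⊗α'Δ)β2 − (12)(1⊗β1Δ)α'. Then: (a) η = a⊗1 for some a ∈ k with aλ1 = aκ1 = 0; (b) (2κ1 − κ2)·α' = 0 in H⊗H; (c) if in addition a ≠ 0, α' ≠ 0, and −(α'Δ⊗1)((12)η) = (1⊗α'Δ)η − (12)(1⊗α'Δ)η, then α' = Σ_{j≥1} w_j (1⊗s^(j) − s^(j)⊗1) for some scalars w_j ∈ k (finitely many nonzero). -/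
open scoped TensorProduct
open Polynomial

noncomputable section

variable (k : Type) [Field k] [CharZero k]

set_option linter.unusedSectionVars false
set_option maxHeartbeats 1000000
set_option synthInstance.maxHeartbeats 400000

namespace EtaAux
open MvPolynomial

variable (k : Type) [Field k] [CharZero k]

/-- substitution `k[X0,X1] →ₐ A`. -/
def T2 {A : Type} [CommRing A] [Algebra k A] (v : Fin 2 → A) :
    MvPolynomial (Fin 2) k →ₐ[k] A := MvPolynomial.aeval v

/-- substitution `k[X0,X1,X2] →ₐ A`. -/
def T3 {A : Type} [CommRing A] [Algebra k A] (v : Fin 3 → A) :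
    MvPolynomial (Fin 3) k →ₐ[k] A := MvPolynomial.aeval v

def E2 : HH k →ₐ[k] MvPolynomial (Fin 2) k :=
  Algebra.TensorProduct.productMap (Polynomial.aeval (X 0)) (Polynomial.aeval (X 1))

def E3 : HHH k →ₐ[k] MvPolynomial (Fin 3) k :=
  Algebra.TensorProduct.productMap (Polynomial.aeval (X 0))
    (Algebra.TensorProduct.productMap (Polynomial.aeval (X 1)) (Polynomial.aeval (X 2)))

def E2inv : MvPolynomial (Fin 2) k →ₐ[k] HH k :=
  MvPolynomial.aeval ![(Polynomial.X : Polynomial k) ⊗ₜ[k] 1, (1 : Polynomial k) ⊗ₜ[k] Polynomial.X]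

lemma E2inv_E2 : (E2inv k).comp (E2 k) = AlgHom.id k _ := by
  ext <;> simp [E2, E2inv]

lemma E2_inj : Function.Injective (E2 k) := by
  intro x y h
  have hx := AlgHom.congr_fun (E2inv_E2 k) x
  have hy := AlgHom.congr_fun (E2inv_E2 k) y
  simp only [AlgHom.coe_comp, Function.comp_apply, AlgHom.coe_id, id_eq] at hx hy
  rw [← hx, ← hy, h]

lemma E2_tmul (p q : Polynomial k) :
    E2 k (p ⊗ₜ[k] q) = Polynomial.aeval (X 0) p * Polynomial.aeval (X 1) q := by
  simp [E2]

lemma E2_betaE (lam kap : k) :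
    E2 k (betaE k lam kap) = MvPolynomial.C lam * X 0 - X 1 + MvPolynomial.C kap := by
  simp [betaE, E2_tmul, MvPolynomial.smul_eq_C_mul]

-- transport lemmas
lemma E3_inc12 (x : HH k) : E3 k (inc12 k x) = T2 k ![X 0, X 1] (E2 k x) := by
  have h : (E3 k).comp (inc12 k) = (T2 k ![X 0, X 1]).comp (E2 k) := by
    ext <;> simp [E3, E2, T2, inc12, tAssoc]
  exact AlgHom.congr_fun h x

lemma E3_inc23 (x : HH k) : E3 k (inc23 k x) = T2 k ![X 1, X 2] (E2 k x) := by
  have h : (E3 k).comp (inc23 k) = (T2 k ![X 1, X 2]).comp (E2 k) := by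
    ext <;> simp [E3, E2, T2, inc23]
  exact AlgHom.congr_fun h x

lemma E3_DL (x : HH k) : E3 k (DL k x) = T2 k ![X 0 + X 1, X 2] (E2 k x) := by
  have h : (E3 k).comp (DL k) = (T2 k ![X 0 + X 1, X 2]).comp (E2 k) := by
    refine Algebra.TensorProduct.ext (Polynomial.algHom_ext ?_) (Polynomial.algHom_ext ?_) <;>
      simp [E3, E2, T2, DL, tAssoc, Hcomul, TensorProduct.add_tmul,
        Algebra.TensorProduct.one_def, Algebra.TensorProduct.assoc_tmul]
  exact AlgHom.congr_fun h x

lemma E3_DR (x : HH k) : E3 k (DR k x) = T2 k ![X 0, X 1 + X 2] (E2 k x) := by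
  have h : (E3 k).comp (DR k) = (T2 k ![X 0, X 1 + X 2]).comp (E2 k) := by
    ext <;> simp [E3, E2, T2, DR, Hcomul]
  exact AlgHom.congr_fun h x

lemma E3_sw12 (x : HHH k) : E3 k (sw12 k x) = T3 k ![X 1, X 0, X 2] (E3 k x) := by
  have h : (E3 k).comp (sw12 k).toAlgHom = (T3 k ![X 1, X 0, X 2]).comp (E3 k) := by
    refine Algebra.TensorProduct.ext (Polynomial.algHom_ext ?_)
      (Algebra.TensorProduct.ext (Polynomial.algHom_ext ?_) (Polynomial.algHom_ext ?_)) <;>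
      simp [E3, T3, sw12, sw2, tAssoc, Algebra.TensorProduct.one_def,
        Algebra.TensorProduct.assoc_tmul, Algebra.TensorProduct.assoc_symm_tmul]
  exact AlgHom.congr_fun h x

lemma E2_sw2 (x : HH k) : E2 k (sw2 k x) = T2 k ![X 1, X 0] (E2 k x) := by
  have h : (E2 k).comp (sw2 k).toAlgHom = (T2 k ![X 1, X 0]).comp (E2 k) := by
    ext <;> simp [E2, T2, sw2]
  exact AlgHom.congr_fun h x

lemma E3_opL (β γ : HH k) :
    E3 k (opL k β γ) = T2 k ![X 0, X 1] (E2 k β) * T2 k ![X 0 + X 1, X 2] (E2 k γ) := by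
  rw [opL, map_mul, E3_inc12, E3_DL]

lemma E3_opR (β γ : HH k) :
    E3 k (opR k β γ) = T2 k ![X 1, X 2] (E2 k β) * T2 k ![X 0, X 1 + X 2] (E2 k γ) := by
  rw [opR, map_mul, E3_inc23, E3_DR]

end EtaAux
namespace EtaAux
open MvPolynomial

variable (k : Type) [Field k] [CharZero k]
variable {A B : Type} [CommRing A] [Algebra k A] [CommRing B] [Algebra k B]

lemma T2_X (w : Fin 2 → A) (i : Fin 2) : T2 k w (X i) = w i := aeval_X w i
lemma T3_X (w : Fin 3 → A) (i : Fin 3) : T3 k w (X i) = w i := aeval_X w i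
lemma T2_C (w : Fin 2 → A) (c : k) : T2 k w (MvPolynomial.C c) = algebraMap k A c := aeval_C w c
lemma T3_C (w : Fin 3 → A) (c : k) : T3 k w (MvPolynomial.C c) = algebraMap k A c := aeval_C w c

lemma T2_pa (w : Fin 2 → A) (u : MvPolynomial (Fin 2) k) (p : Polynomial k) :
    T2 k w (Polynomial.aeval u p) = Polynomial.aeval (T2 k w u) p :=
  (Polynomial.aeval_algHom_apply (T2 k w) u p).symm

lemma T3_pa (w : Fin 3 → A) (u : MvPolynomial (Fin 3) k) (p : Polynomial k) :
    T3 k w (Polynomial.aeval u p) = Polynomial.aeval (T3 k w u) p :=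
  (Polynomial.aeval_algHom_apply (T3 k w) u p).symm

lemma map_T2 (φ : A →ₐ[k] B) (u v : A) (f : MvPolynomial (Fin 2) k) :
    φ (T2 k ![u, v] f) = T2 k ![φ u, φ v] f := by
  rw [T2, T2, comp_aeval_apply]
  have h : (fun i => φ (![u, v] i)) = ![φ u, φ v] := by
    funext i; fin_cases i <;> simp
  rw [h]

lemma T3_T2 (w : Fin 3 → A) (u v : MvPolynomial (Fin 3) k) (f : MvPolynomial (Fin 2) k) :
    T3 k w (T2 k ![u, v] f) = T2 k ![T3 k w u, T3 k w v] f :=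
  map_T2 k (T3 k w) u v f

lemma T2_id (f : MvPolynomial (Fin 2) k) : T2 k ![X 0, X 1] f = f := by
  have h : (![X 0, X 1] : Fin 2 → MvPolynomial (Fin 2) k) = MvPolynomial.X := by
    funext i; fin_cases i <;> simp
  rw [T2, h, MvPolynomial.aeval_X_left_apply]

lemma Cmul_pa {c : k} {p : Polynomial k} (h : Polynomial.C c * p = 0) (u : A) :
    algebraMap k A c * Polynomial.aeval u p = 0 := by
  have h2 := congrArg (Polynomial.aeval u) h
  simpa using h2

end EtaAux
open EtaAux MvPolynomial in
/-- **Lemma 4.1 (structure of `η` and `α'`).** -/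
theorem eta_alpha'_structure
    (k : Type) [Field k] [CharZero k]
    (lam1 kap1 lam2 kap2 : k) (η α' : HH k)
    (hform : ∃ p : Polynomial k, η = p ⊗ₜ[k] (1 : Polynomial k))
    (heta : opL k (betaE k lam1 kap1) η =
      opR k η (betaE k lam2 kap2) - sw12 k (opR k (betaE k lam2 kap2) η))
    (halpha : opL k (betaE k lam1 kap1) α' =
      opR k α' (betaE k lam2 kap2) - sw12 k (opR k (betaE k lam1 kap1) α')) :
    ∃ a : k,
      -- (a)
      (η = a • ((1 : Polynomial k) ⊗ₜ[k] (1 : Polynomial k)) ∧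
        a * lam1 = 0 ∧ a * kap1 = 0) ∧
      -- (b)
      (2 * kap1 - kap2) • α' = 0 ∧
      -- (c)
      (a ≠ 0 → α' ≠ 0 →
        (- opL k α' (sw2 k η) = opR k α' η - sw12 k (opR k α' η)) →
        ∃ (N : ℕ) (w : ℕ → k),
          α' = ∑ j ∈ Finset.Icc 1 N, w j •
            ((1 : Polynomial k) ⊗ₜ[k] sp k j - sp k j ⊗ₜ[k] (1 : Polynomial k))) := by
  classical
  obtain ⟨p, hp⟩ := hform
  have hEη : E2 k η = Polynomial.aeval (X 0 : MvPolynomial (Fin 2) k) p := by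
    rw [hp, E2_tmul]; simp
  have h3 := congrArg (E3 k) heta
  simp only [map_sub, E3_opL, E3_opR, E3_sw12, E2_betaE, hEη] at h3
  simp only [map_sub, map_add, map_mul, T3_T2, T2_pa, T3_pa, T2_X, T3_X, T2_C, T3_C, T2_id,
    Matrix.cons_val_zero, Matrix.cons_val_one, Matrix.cons_val_two, Matrix.head_cons,
    Matrix.tail_cons, MvPolynomial.algebraMap_eq, map_zero, zero_add, add_zero, mul_zero,
    zero_mul, sub_zero] at h3
  -- h3 : (C lam1 * X 0 - X 1 + C kap1) * aeval (X 0 + X 1) p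
  --      = aeval (X 1) p * (C lam2 * X 0 - (X 1 + X 2) + C kap2)
  --        - (C lam2 * X 0 - X 2 + C kap2) * aeval (X 1) p
  have hk1 : Polynomial.C kap1 * p = 0 := by
    have h := congrArg (T3 k ![(0 : Polynomial k), Polynomial.X, 0]) h3
    simp only [map_sub, map_add, map_mul, T3_T2, T2_pa, T3_pa, T2_X, T3_X, T2_C, T3_C, T2_id,
      Matrix.cons_val_zero, Matrix.cons_val_one, Matrix.cons_val_two, Matrix.head_cons,
      Matrix.tail_cons, Polynomial.algebraMap_eq, map_zero, zero_add, add_zero, mul_zero,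
      zero_mul, sub_zero, Polynomial.aeval_X_left_apply] at h
    linear_combination h
  have hl1x : Polynomial.C lam1 * (Polynomial.X * p) = 0 := by
    have h := congrArg (T3 k ![Polynomial.X, (0 : Polynomial k), 0]) h3
    simp only [map_sub, map_add, map_mul, T3_T2, T2_pa, T3_pa, T2_X, T3_X, T2_C, T3_C, T2_id,
      Matrix.cons_val_zero, Matrix.cons_val_one, Matrix.cons_val_two, Matrix.head_cons,
      Matrix.tail_cons, Polynomial.algebraMap_eq, map_zero, zero_add, add_zero, mul_zero,
      zero_mul, sub_zero, Polynomial.aeval_X_left_apply] at h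
    linear_combination h - hk1
  have hl1 : Polynomial.C lam1 * p = 0 := by
    rcases mul_eq_zero.1 hl1x with h | h
    · rw [h, zero_mul]
    · rcases mul_eq_zero.1 h with h' | h'
      · exact absurd h' Polynomial.X_ne_zero
      · rw [h', mul_zero]
  have hpc : Polynomial.aeval (X 0 + X 1 : MvPolynomial (Fin 2) k) p
      = Polynomial.aeval (X 1 : MvPolynomial (Fin 2) k) p := by
    have h := congrArg (T3 k ![(X 0 : MvPolynomial (Fin 2) k), X 1, 0]) h3
    simp only [map_sub, map_add, map_mul, T3_T2, T2_pa, T3_pa, T2_X, T3_X, T2_C, T3_C, T2_id,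
      Matrix.cons_val_zero, Matrix.cons_val_one, Matrix.cons_val_two, Matrix.head_cons,
      Matrix.tail_cons, MvPolynomial.algebraMap_eq, map_zero, zero_add, add_zero, mul_zero,
      zero_mul, sub_zero] at h
    have z1 := Cmul_pa k hl1 (X 0 + X 1 : MvPolynomial (Fin 2) k)
    have z2 := Cmul_pa k hk1 (X 0 + X 1 : MvPolynomial (Fin 2) k)
    rw [MvPolynomial.algebraMap_eq] at z1 z2
    have hXeq : (X 1 : MvPolynomial (Fin 2) k) * Polynomial.aeval (X 0 + X 1 : MvPolynomial (Fin 2) k) p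
        = (X 1 : MvPolynomial (Fin 2) k) * Polynomial.aeval (X 1 : MvPolynomial (Fin 2) k) p := by
      linear_combination -h + X 0 * z1 + z2
    exact mul_left_cancel₀ (MvPolynomial.X_ne_zero 1) hXeq
  have hpC : p = Polynomial.C (p.coeff 0) := by
    have h := congrArg (T2 k ![Polynomial.X, (0 : Polynomial k)]) hpc
    simp only [T2_pa, T2_X, Matrix.cons_val_zero, Matrix.cons_val_one, Matrix.head_cons,
      map_add, add_zero, Polynomial.aeval_X_left_apply] at h
    rw [← Polynomial.coeff_zero_eq_aeval_zero', Polynomial.algebraMap_eq] at h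
    exact h
  set a := p.coeff 0 with hadef
  have hη : η = a • ((1 : Polynomial k) ⊗ₜ[k] (1 : Polynomial k)) := by
    have hCsm : Polynomial.C a = a • (1 : Polynomial k) := by
      rw [← Polynomial.algebraMap_eq, Algebra.algebraMap_eq_smul_one]
    rw [hp]
    conv_lhs => rw [hpC, hCsm]
    exact (TensorProduct.smul_tmul' _ _ _).symm
  have hal : a * lam1 = 0 := by
    have h5 : Polynomial.C (lam1 * a) = 0 := by rw [Polynomial.C_mul, ← hpC]; exact hl1
    rw [mul_comm]; exact Polynomial.C_eq_zero.mp h5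
  have hak : a * kap1 = 0 := by
    have h5 : Polynomial.C (kap1 * a) = 0 := by rw [Polynomial.C_mul, ← hpC]; exact hk1
    rw [mul_comm]; exact Polynomial.C_eq_zero.mp h5
  -- part (b)
  have h4 := congrArg (E3 k) halpha
  simp only [map_sub, E3_opL, E3_opR, E3_sw12, E2_betaE] at h4
  simp only [map_sub, map_add, map_mul, T3_T2, T2_pa, T3_pa, T2_X, T3_X, T2_C, T3_C, T2_id,
    Matrix.cons_val_zero, Matrix.cons_val_one, Matrix.cons_val_two, Matrix.head_cons,
    Matrix.tail_cons, MvPolynomial.algebraMap_eq, map_zero, zero_add, add_zero, mul_zero,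
    zero_mul, sub_zero] at h4
  have hcf : (2 * MvPolynomial.C kap1 - MvPolynomial.C kap2) * E2 k α' = 0 := by
    have h := congrArg (T3 k ![(0 : MvPolynomial (Fin 2) k), X 0, X 1]) h4
    simp only [map_sub, map_add, map_mul, T3_T2, T2_pa, T3_pa, T2_X, T3_X, T2_C, T3_C, T2_id,
      Matrix.cons_val_zero, Matrix.cons_val_one, Matrix.cons_val_two, Matrix.head_cons,
      Matrix.tail_cons, MvPolynomial.algebraMap_eq, map_zero, zero_add, add_zero, mul_zero,
      zero_mul, sub_zero] at h
    linear_combination h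
  have hb : (2 * kap1 - kap2) • α' = 0 := by
    apply E2_inj k
    rw [map_smul, map_zero, MvPolynomial.smul_eq_C_mul]
    have hC2 : (MvPolynomial.C (2 * kap1 - kap2) : MvPolynomial (Fin 2) k)
        = 2 * MvPolynomial.C kap1 - MvPolynomial.C kap2 := by
      rw [map_sub, map_mul, map_ofNat]
    rw [hC2]; exact hcf
  refine ⟨a, ⟨hη, hal, hak⟩, hb, ?_⟩
  -- part (c)
  intro ha hα' hcc
  have hEη' : E2 k η = algebraMap k (MvPolynomial (Fin 2) k) a := by
    rw [hη, map_smul]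
    simp [E2_tmul, MvPolynomial.smul_eq_C_mul, MvPolynomial.algebraMap_eq]
  have hsw : E2 k (sw2 k η) = algebraMap k (MvPolynomial (Fin 2) k) a := by
    rw [hη]
    simp [map_smul, sw2, Algebra.TensorProduct.comm_tmul, E2_tmul,
      MvPolynomial.smul_eq_C_mul, MvPolynomial.algebraMap_eq]
  have hadd : opL k α' (sw2 k η) + (opR k α' η - sw12 k (opR k α' η)) = 0 := by
    rw [← hcc]
    exact add_neg_cancel (opL k α' (sw2 k η))
  have h5 := congrArg (E3 k) hadd
  simp only [map_add, map_sub, map_zero, E3_opL, E3_opR, E3_sw12, hEη', hsw] at h5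
  simp only [map_sub, map_add, map_mul, map_neg, T3_T2, T2_pa, T3_pa, T2_X, T3_X, T2_C, T3_C,
    T2_id, AlgHom.commutes, Matrix.cons_val_zero, Matrix.cons_val_one, Matrix.cons_val_two,
    Matrix.head_cons, Matrix.tail_cons, MvPolynomial.algebraMap_eq, map_zero, zero_add,
    add_zero, mul_zero, zero_mul, sub_zero] at h5
  have hCa : (MvPolynomial.C a : MvPolynomial (Fin 3) k) ≠ 0 := by
    intro h; exact ha (MvPolynomial.C_injective (Fin 3) k (by rw [h, map_zero]))
  have hcoc : T2 k ![(X 0 : MvPolynomial (Fin 3) k), X 2] (E2 k α')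
      = T2 k ![(X 0 : MvPolynomial (Fin 3) k), X 1] (E2 k α')
        + T2 k ![(X 1 : MvPolynomial (Fin 3) k), X 2] (E2 k α') := by
    apply mul_left_cancel₀ hCa
    linear_combination -h5
  have h00 : T2 k ![(0 : MvPolynomial (Fin 2) k), 0] (E2 k α') = 0 := by
    have h := congrArg (T3 k ![(0 : MvPolynomial (Fin 2) k), 0, 0]) hcoc
    simp only [map_add, T3_T2, T3_X, Matrix.cons_val_zero, Matrix.cons_val_one,
      Matrix.cons_val_two, Matrix.head_cons, Matrix.tail_cons] at h
    exact (add_eq_left.mp h.symm)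
  have hneg : T2 k ![(X 0 : MvPolynomial (Fin 2) k), 0] (E2 k α')
      = - T2 k ![(0 : MvPolynomial (Fin 2) k), X 0] (E2 k α') := by
    have h := congrArg (T3 k ![(0 : MvPolynomial (Fin 2) k), X 0, 0]) hcoc
    simp only [map_add, T3_T2, T3_X, Matrix.cons_val_zero, Matrix.cons_val_one,
      Matrix.cons_val_two, Matrix.head_cons, Matrix.tail_cons] at h
    rw [h00] at h
    linear_combination -h
  have hsplit : E2 k α' = T2 k ![(X 0 : MvPolynomial (Fin 2) k), 0] (E2 k α')
      + T2 k ![(0 : MvPolynomial (Fin 2) k), X 1] (E2 k α') := by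
    have h := congrArg (T3 k ![(X 0 : MvPolynomial (Fin 2) k), 0, X 1]) hcoc
    simp only [map_add, T3_T2, T3_X, T2_id, Matrix.cons_val_zero, Matrix.cons_val_one,
      Matrix.cons_val_two, Matrix.head_cons, Matrix.tail_cons] at h
    exact h
  set q := T2 k ![(0 : Polynomial k), Polynomial.X] (E2 k α') with hqdef
  have hpa : ∀ u : MvPolynomial (Fin 2) k,
      Polynomial.aeval u q = T2 k ![(0 : MvPolynomial (Fin 2) k), u] (E2 k α') := by
    intro u
    rw [hqdef, map_T2 k (Polynomial.aeval u), map_zero, Polynomial.aeval_X]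
  have hfq : E2 k α' = Polynomial.aeval (X 1 : MvPolynomial (Fin 2) k) q
      - Polynomial.aeval (X 0 : MvPolynomial (Fin 2) k) q := by
    rw [hpa, hpa]
    linear_combination hsplit + hneg
  have hq0 : q.coeff 0 = 0 := by
    have h := hpa 0
    rw [h00] at h
    have h2 : algebraMap k (MvPolynomial (Fin 2) k) (q.coeff 0) = 0 := by
      rw [Polynomial.coeff_zero_eq_aeval_zero']; exact h
    rw [MvPolynomial.algebraMap_eq] at h2
    exact MvPolynomial.C_injective (Fin 2) k (by rw [h2, map_zero])
  have hαq : α' = (1 : Polynomial k) ⊗ₜ[k] q - q ⊗ₜ[k] (1 : Polynomial k) := by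
    apply E2_inj k
    rw [map_sub, E2_tmul, E2_tmul, map_one, map_one, one_mul, mul_one]
    exact hfq
  refine ⟨q.natDegree, fun j => (j.factorial : k) * q.coeff j, ?_⟩
  rw [hαq]
  have hterm : ∀ j ∈ Finset.Icc 1 q.natDegree,
      ((j.factorial : k) * q.coeff j) •
          ((1 : Polynomial k) ⊗ₜ[k] sp k j - sp k j ⊗ₜ[k] (1 : Polynomial k))
        = (1 : Polynomial k) ⊗ₜ[k] (q.coeff j • Polynomial.X ^ j)
          - (q.coeff j • Polynomial.X ^ j) ⊗ₜ[k] (1 : Polynomial k) := by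
    intro j hj
    have hfac : ((j.factorial : k)) ≠ 0 := Nat.cast_ne_zero.2 j.factorial_ne_zero
    have hsp : ((j.factorial : k) * q.coeff j) • sp k j = q.coeff j • (Polynomial.X ^ j) := by
      rw [sp, smul_smul, show ((j.factorial : k) * q.coeff j) * ((j.factorial : k))⁻¹
        = q.coeff j from by rw [mul_comm, ← mul_assoc, inv_mul_cancel₀ hfac, one_mul]]
    rw [smul_sub, ← TensorProduct.tmul_smul, TensorProduct.smul_tmul', hsp]
  rw [Finset.sum_congr rfl hterm, Finset.sum_sub_distrib, ← TensorProduct.tmul_sum,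
    ← TensorProduct.sum_tmul]
  have hqsum : (∑ j ∈ Finset.Icc 1 q.natDegree, q.coeff j • Polynomial.X ^ j) = q := by
    conv_rhs => rw [Polynomial.as_sum_range_C_mul_X_pow q]
    have hins : Finset.range (q.natDegree + 1) = insert 0 (Finset.Icc 1 q.natDegree) := by
      ext m; simp [Nat.lt_succ_iff]; omega
    rw [hins, Finset.sum_insert (by simp), hq0]
    simp [Polynomial.smul_eq_C_mul]
  rw [hqsum]
end
end
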